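/- Let N ≥ 9 be a semiprime natural number with prime factors p and q (p ≠ q). Let d ∈ ℕ and let b_1, ..., b_d be consecutive integers (b_{i+1} = b_i + 1) with ⌈N^{1/2}/√2⌉ ≤ b_i ≤ ⌊N^{1/2}⌋ and gcd(b_i, N) = 1 for all i. For each i, let n_{0,i} = N mod b_i, n_{1,i} = ⌊N/b_i⌋ mod b_i, and n_{2,i} = ⌊N/b_i²⌋ be the b_i-adic digits of N, and set D := b_1 + ⌊N/b_d⌋. If gcd(D + z, N) = 1 for every z ∈ {0, ..., 2d−2}, and n_{1,i} ≤ n_{0,i} + 1 for every i, then: n_{2,i} = 1 for every i (so each b_i-adic digit polynomial P_{b_i} has degree 2 with leading coefficient 1), and, defining b_{d+i} ∈ Z_N by b_{d+i} ≡ n_{0,i} · b_i^{−1} (mod N), we have gcd(b_j − b_k, N) = 1 for every choice of j ≠ k in {1, ..., 2d}. -/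

import Mathlib

private lemma gcd_one_of_congr {x y : ℤ} {n : ℕ} (h : (n:ℤ) ∣ x - y)
    (hy : Int.gcd y (n:ℤ) = 1) : Int.gcd x (n:ℤ) = 1 := by
  rw [← Int.isCoprime_iff_gcd_eq_one] at *
  obtain ⟨t, ht⟩ := h
  have hx : x = y + (n:ℤ) * t := by linarith
  rw [hx]
  exact hy.add_mul_left_left t

private lemma div_succ_eq {N B m c : ℕ} (hB : 2 ≤ B) (hc : c < B) (hm : m ≤ c + 1)
    (hN : N = B * (B + m) + c) : N / (B + 1) + 1 = B + m := by
  obtain ⟨B', rfl⟩ : ∃ B', B = B' + 2 := ⟨B - 2, by omega⟩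
  have hq : N / (B' + 2 + 1) = B' + 1 + m := by
    apply Nat.div_eq_of_lt_le
    · nlinarith
    · nlinarith
  omega

set_option maxHeartbeats 1000000 in
theorem consecutive_bases_lemma (N p q d : ℕ) (hd : 0 < d)
    (hp : p.Prime) (hq : q.Prime) (hpq : p ≠ q) (hN : N = p * q) (hN9 : 9 ≤ N)
    (b : Fin d → ℕ)
    (hconsec : ∀ i : Fin d, ∀ h : (i : ℕ) + 1 < d, b ⟨(i : ℕ) + 1, h⟩ = b i + 1)
    (hlo : ∀ i, ⌈Real.sqrt (N : ℝ) / Real.sqrt 2⌉₊ ≤ b i)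
    (hhi : ∀ i, b i ≤ Nat.sqrt N)
    (hcop : ∀ i, Nat.Coprime (b i) N)
    (n0 n1 n2 : Fin d → ℕ)
    (hn0 : ∀ i, n0 i = N % b i)
    (hn1 : ∀ i, n1 i = (N / b i) % b i)
    (hn2 : ∀ i, n2 i = N / (b i) ^ 2)
    (D : ℕ) (hD : D = b ⟨0, hd⟩ + N / b ⟨d - 1, by omega⟩)
    (hDz : ∀ z, z ≤ 2 * d - 2 → Nat.Coprime (D + z) N)
    (hdig : ∀ i, n1 i ≤ n0 i + 1)
    (bb : Fin d → ℕ)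
    (hbb : ∀ i, bb i < N ∧ (N : ℤ) ∣ ((bb i : ℤ) * (b i : ℤ) - (n0 i : ℤ))) :
    (∀ i, n2 i = 1) ∧
      (∀ j k : Fin d, j ≠ k → Int.gcd ((b j : ℤ) - (b k : ℤ)) (N : ℤ) = 1) ∧
      (∀ j k : Fin d, j ≠ k → Int.gcd ((bb j : ℤ) - (bb k : ℤ)) (N : ℤ) = 1) ∧
      (∀ j k : Fin d, Int.gcd ((b j : ℤ) - (bb k : ℤ)) (N : ℤ) = 1) := by
  -- b i divides N only if it is 1
  have hnd : ∀ i, b i ∣ N → b i = 1 := by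
    intro i h
    exact Nat.eq_one_of_dvd_one ((hcop i) ▸ Nat.dvd_gcd dvd_rfl h)
  have hbposN : ∀ i, 0 < b i := by
    intro i
    rcases Nat.eq_zero_or_pos (b i) with h | h
    · exfalso; have := hcop i; rw [h] at this
      simp [Nat.Coprime] at this; omega
    · exact h
  -- upper: (b i)^2 ≤ N
  have hble : ∀ i, (b i)^2 ≤ N := by
    intro i
    calc (b i)^2 ≤ (Nat.sqrt N)^2 := Nat.pow_le_pow_left (hhi i) 2
      _ ≤ N := Nat.sqrt_le' N
  -- lower: N ≤ 2 (b i)^2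
  have hb2 : ∀ i, N ≤ 2 * (b i)^2 := by
    intro i
    have h1 : Real.sqrt N / Real.sqrt 2 ≤ (b i : ℝ) := Nat.ceil_le.mp (hlo i)
    have h2 : Real.sqrt N ≤ (b i : ℝ) * Real.sqrt 2 := by
      rw [div_le_iff₀ (by positivity)] at h1; exact h1
    have h3 : (N : ℝ) ≤ 2 * (b i : ℝ)^2 := by
      have hs : Real.sqrt N * Real.sqrt N = (N:ℝ) :=
        Real.mul_self_sqrt (by positivity)
      have hs2 : Real.sqrt 2 * Real.sqrt 2 = 2 :=
        Real.mul_self_sqrt (by norm_num)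
      nlinarith [Real.sqrt_nonneg (N:ℝ), Real.sqrt_nonneg (2:ℝ)]
    exact_mod_cast h3
  -- strictness
  have hbstrict : ∀ i, (b i)^2 < N ∧ N < 2 * (b i)^2 := by
    intro i
    have h1 := hble i; have h2 := hb2 i
    have hne1 : (b i)^2 ≠ N := by
      intro h
      have := hnd i ⟨b i, by rw [← h]; ring⟩
      rw [this] at h; omega
    have hne2 : N ≠ 2 * (b i)^2 := by
      intro h
      have := hnd i ⟨2 * b i, by rw [h]; ring⟩
      rw [this] at h; omega
    omega
  have hbge2 : ∀ i, 2 ≤ b i := by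
    intro i
    by_contra hcon
    push_neg at hcon
    have h1 : (b i)^2 ≤ 1^2 := Nat.pow_le_pow_left (by omega) 2
    have := (hbstrict i).2
    omega
  -- n2 = 1
  have hn2one : ∀ i, n2 i = 1 := by
    intro i
    rw [hn2 i]
    exact Nat.div_eq_of_lt_le (by linarith [(hbstrict i).1])
      (by linarith [(hbstrict i).2])
  -- N / b i = b i + n1 i
  have hdiv : ∀ i, N / b i = b i + n1 i := by
    intro i
    have h1 : N / b i / b i = 1 := by
      rw [Nat.div_div_eq_div_mul, ← pow_two, ← hn2 i]; exact hn2one i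
    have h2 := Nat.div_add_mod (N / b i) (b i)
    rw [h1, ← hn1 i] at h2
    omega
  -- b i = b 0 + i
  have hbeq : ∀ n (h : n < d), b ⟨n, h⟩ = b ⟨0, hd⟩ + n := by
    intro n
    induction n with
    | zero => intro h; rfl
    | succ m ih =>
      intro h
      have hm : m < d := by omega
      have := hconsec ⟨m, hm⟩ h
      rw [this, ih hm]
      omega
  -- key step: N / b_{n+1} + 1 = N / b_n
  have hstep : ∀ n (h : n + 1 < d) (h' : n < d),
      N / b ⟨n+1, h⟩ + 1 = N / b ⟨n, h'⟩ := by
    intro n h h'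
    have hBn : b ⟨n+1, h⟩ = b ⟨n, h'⟩ + 1 := hconsec ⟨n, h'⟩ h
    have hNe : N = b ⟨n, h'⟩ * (N / b ⟨n, h'⟩) + n0 ⟨n, h'⟩ := by
      rw [hn0 ⟨n, h'⟩]; exact (Nat.div_add_mod N _).symm
    have hdivi := hdiv ⟨n, h'⟩
    have hc : n0 ⟨n, h'⟩ < b ⟨n, h'⟩ := by
      rw [hn0 ⟨n, h'⟩]; exact Nat.mod_lt _ (hbposN _)
    have hm := hdig ⟨n, h'⟩
    have hB2 := hbge2 ⟨n, h'⟩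
    rw [hBn, hdivi]
    exact div_succ_eq hB2 hc hm (by rw [hNe, hdivi])
  -- N / b_n + n = C where C = N / b_0
  set C := N / b ⟨0, hd⟩ with hC
  have hdivC : ∀ n (h : n < d), N / b ⟨n, h⟩ + n = C := by
    intro n
    induction n with
    | zero => intro h; rfl
    | succ m ih =>
      intro h
      have h1 := hstep m h (by omega)
      have h2 := ih (by omega)
      omega
  -- bounds: d ≤ b 0 ≤ C
  have hb0C : b ⟨0, hd⟩ ≤ C := by
    rw [hC]
    exact (Nat.le_div_iff_mul_le (hbposN _)).mpr (by nlinarith [hble ⟨0, hd⟩])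
  have hdb0 : d ≤ b ⟨0, hd⟩ := by
    have h1 : b ⟨0, hd⟩ + (d - 1) ≤ Nat.sqrt N := by
      have := hhi ⟨d-1, by omega⟩
      rw [hbeq (d-1) (by omega)] at this
      exact this
    have h2 : (Nat.sqrt N)^2 ≤ N := Nat.sqrt_le' N
    have h3 := (hbstrict ⟨0, hd⟩).2
    by_contra hcon
    push_neg at hcon
    have h4 : 2 * b ⟨0, hd⟩ ≤ b ⟨0, hd⟩ + (d - 1) := by omega
    have h5 : (2 * b ⟨0, hd⟩)^2 ≤ N :=
      le_trans (Nat.pow_le_pow_left (le_trans h4 h1) 2) h2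
    have h6 := hbposN ⟨0, hd⟩
    nlinarith
  have hdC : d ≤ C := le_trans hdb0 hb0C
  -- D value
  have hDval : D = b ⟨0, hd⟩ + (C - (d - 1)) := by
    rw [hD]
    have := hdivC (d-1) (by omega)
    omega
  -- small numbers are coprime to N
  have hsmall : ∀ m : ℕ, 1 ≤ m → m ≤ 2 * d - 1 → Nat.Coprime m N := by
    intro m h1 h2
    obtain ⟨g, hg⟩ : ∃ g, Nat.gcd m N = g := ⟨_, rfl⟩
    by_contra hgne
    have hgne1 : g ≠ 1 := by
      intro h
      exact hgne (by rw [Nat.Coprime, hg, h])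
    have hgdvdm : g ∣ m := hg ▸ Nat.gcd_dvd_left m N
    have hgdvdN : g ∣ N := hg ▸ Nat.gcd_dvd_right m N
    have hgpos : 0 < g := hg ▸ Nat.gcd_pos_of_pos_left N h1
    have hg2 : 2 ≤ g := by omega
    have hgm : g ≤ m := Nat.le_of_dvd h1 hgdvdm
    have ht := Nat.div_add_mod D g
    have hr : D % g < g := Nat.mod_lt _ hgpos
    have hmain : ∃ z, z ≤ 2 * d - 2 ∧ g ∣ D + z := by
      rcases Nat.eq_zero_or_pos (D % g) with h0 | h0
      · exact ⟨0, by omega, Nat.dvd_of_mod_eq_zero h0⟩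
      · refine ⟨g - D % g, by omega, ⟨D / g + 1, ?_⟩⟩
        rw [Nat.mul_add, Nat.mul_one]
        omega
    obtain ⟨z, hzle, hgdvdDz⟩ := hmain
    have hco := hDz z hzle
    have hdvd1 : g ∣ 1 := by
      rw [← hco]
      exact Nat.dvd_gcd hgdvdDz hgdvdN
    exact hgne1 (Nat.eq_one_of_dvd_one hdvd1)
  -- bb i ≡ -(N / b i) mod N
  have hbbc : ∀ i : Fin d, (N : ℤ) ∣ ((bb i : ℤ) + ((N / b i : ℕ) : ℤ)) := by
    intro i
    have h1 := (hbb i).2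
    have h2 : (b i : ℤ) * ((N / b i : ℕ) : ℤ) + (n0 i : ℤ) = (N : ℤ) := by
      rw [hn0 i]
      exact_mod_cast congrArg (Nat.cast : ℕ → ℤ) (Nat.div_add_mod N (b i))
    have h3 : (N : ℤ) ∣ (b i : ℤ) * ((bb i : ℤ) + ((N / b i : ℕ) : ℤ)) := by
      have he : (b i : ℤ) * ((bb i : ℤ) + ((N / b i : ℕ) : ℤ)) =
          ((bb i : ℤ) * (b i : ℤ) - (n0 i : ℤ)) + (N : ℤ) := by
        rw [← h2]; ring
      rw [he]
      exact dvd_add h1 dvd_rfl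
    have hco : IsCoprime ((N : ℕ) : ℤ) (b i : ℤ) :=
      (Nat.isCoprime_iff_coprime.mpr (hcop i)).symm
    exact hco.dvd_of_dvd_mul_left h3
  -- casts
  have hdivZ : ∀ j : Fin d, ((N / b j : ℕ) : ℤ) = (C : ℤ) - (j : ℤ) := by
    intro j
    have h1 := hdivC j j.isLt
    rw [show (⟨(j:ℕ), j.isLt⟩ : Fin d) = j from rfl] at h1
    omega
  have hbZ : ∀ j : Fin d, ((b j : ℕ) : ℤ) = ((b ⟨0, hd⟩ : ℕ) : ℤ) + (j : ℤ) := by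
    intro j
    have h1 := hbeq j j.isLt
    rw [show (⟨(j:ℕ), j.isLt⟩ : Fin d) = j from rfl] at h1
    omega
  -- coprimality of index differences
  have hidx : ∀ j k : Fin d, j ≠ k →
      Int.gcd (((j:ℕ) : ℤ) - ((k:ℕ) : ℤ)) (N : ℤ) = 1 := by
    intro j k hjk
    have hne : ((j:ℕ) : ℤ) - ((k:ℕ) : ℤ) ≠ 0 := by
      intro h
      exact hjk (Fin.ext (by omega))
    have hub : (((j:ℕ) : ℤ) - ((k:ℕ) : ℤ)).natAbs ≤ 2 * d - 1 := by
      have hj := j.isLt; have hk := k.isLt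
      omega
    have hlb : 1 ≤ (((j:ℕ) : ℤ) - ((k:ℕ) : ℤ)).natAbs := by omega
    have hco := hsmall _ hlb hub
    have hgcd : Int.gcd (((j:ℕ) : ℤ) - ((k:ℕ) : ℤ)) (N : ℤ) =
        Nat.gcd (((j:ℕ) : ℤ) - ((k:ℕ) : ℤ)).natAbs N := by
      simp [Int.gcd]
    rw [hgcd]
    exact hco
  refine ⟨hn2one, ?_, ?_, ?_⟩
  · -- b j - b k
    intro j k hjk
    have hrw : (b j : ℤ) - (b k : ℤ) = ((j:ℕ) : ℤ) - ((k:ℕ) : ℤ) := by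
      rw [hbZ j, hbZ k]; ring
    rw [hrw]
    exact hidx j k hjk
  · -- bb j - bb k
    intro j k hjk
    apply gcd_one_of_congr (y := ((j:ℕ) : ℤ) - ((k:ℕ) : ℤ))
    · have h1 := hbbc j
      have h2 := hbbc k
      have he : ((bb j : ℤ) - (bb k : ℤ)) - (((j:ℕ) : ℤ) - ((k:ℕ) : ℤ)) =
          ((bb j : ℤ) + ((N / b j : ℕ) : ℤ)) - ((bb k : ℤ) + ((N / b k : ℕ) : ℤ)) := by
        rw [hdivZ j, hdivZ k]; ring
      rw [he]
      exact dvd_sub h1 h2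
    · exact hidx j k hjk
  · -- b j - bb k
    intro j k
    have hzle : d - 1 + (j : ℕ) - (k : ℕ) ≤ 2 * d - 2 := by
      have := j.isLt; have := k.isLt; omega
    have hcopz := hDz _ hzle
    apply gcd_one_of_congr (y := ((D + (d - 1 + (j : ℕ) - (k : ℕ)) : ℕ) : ℤ))
    · have h2 := hbbc k
      have he : ((b j : ℕ) : ℤ) - ((bb k : ℕ) : ℤ)
          - ((D + (d - 1 + (j : ℕ) - (k : ℕ)) : ℕ) : ℤ) =
          -(((bb k : ℕ) : ℤ) + ((N / b k : ℕ) : ℤ)) := by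
        rw [hbZ j, hdivZ k, Nat.cast_add]
        have hDZ : ((D : ℕ) : ℤ) + ((d - 1 + (j : ℕ) - (k : ℕ) : ℕ) : ℤ) =
            ((b ⟨0, hd⟩ : ℕ) : ℤ) + ((j : ℕ) : ℤ) + ((C : ℕ) : ℤ) - ((k : ℕ) : ℤ) := by
          have hk := k.isLt
          omega
        linarith
      rw [he]
      exact dvd_neg.mpr h2
    · rw [Int.gcd_natCast_natCast]
      exact hcopz
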